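/- Let R be a commutative unital ring, I an ideal of R, and M an injective R-module. Then there is a short exact sequence 0 → Γ_I(M) → M → D_I(M) → 0; in particular D_I(M) ≅ M/Γ_I(M), where Γ_I(M) = {m ∈ M : I^k m = 0 for some k ≥ 1} and D_I(M) = colim_k Hom_R(I^k, M). -/

import Mathlib

/-!
STATEMENT 5: Let `R` be a commutative unital ring, `I` an ideal of `R`, and `M` an injective
`R`-module. Then there is a short exact sequence `0 → Γ_I(M) → M → D_I(M) → 0`, where
`Γ_I(M) = {m ∈ M : I^k m = 0 for some k ≥ 1}` and `D_I(M) = colim_k Hom_R(I^k, M)`, and the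
map `M → D_I(M)` is induced by the restrictions of `Hom_R(R, M) ≅ M` to the ideals `I^k`.

With `Γ_I(M) → M` the (automatically injective) submodule inclusion, the short exactness is
expressed as: the canonical map `M → D_I(M)` is surjective with kernel `Γ_I(M)`
(so `D_I(M) ≅ M/Γ_I(M)`).
-/

universe u

open Module

/-- The `I`-torsion submodule `Γ_I(M) = {m ∈ M : I^k m = 0 for some k ≥ 1}`. -/
noncomputable def torsionGamma (R : Type u) [CommRing R] (I : Ideal R) (M : Type u)
    [AddCommGroup M] [Module R M] : Submodule R M :=
  ⨆ k : ℕ, Submodule.torsionBySet R M ((I ^ (k + 1) : Ideal R) : Set R)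

/-- The restriction map `M → Hom_R(J, M)`, sending `m` to the restriction of `x ↦ x • m`
to the ideal `J ⊆ R`. -/
noncomputable def restrictionMap (R : Type u) [CommRing R] (M : Type u) [AddCommGroup M]
    [Module R M] (J : Ideal R) : M →ₗ[R] (J →ₗ[R] M) :=
  (LinearMap.domRestrict' J).comp (LinearMap.lsmul R M).flip

/-- The directed system `k ↦ Hom_R(I^(k+1), M)` with the restriction maps induced by
the inclusions `I^(l+1) ⊆ I^(k+1)` for `k ≤ l`. -/
noncomputable def homPowDiagram (R : Type u) [CommRing R] (I : Ideal R) (M : Type u)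
    [AddCommGroup M] [Module R M] :
    ∀ k l : ℕ, k ≤ l → (↥(I ^ (k + 1)) →ₗ[R] M) →ₗ[R] (↥(I ^ (l + 1)) →ₗ[R] M) :=
  fun _ _ h =>
    LinearMap.lcomp R M (Submodule.inclusion (Ideal.pow_le_pow_right (by omega)))

/-- The ideal transform `D_I(M) = colim_{k ≥ 1} Hom_R(I^k, M)`. -/
noncomputable abbrev idealTransform (R : Type u) [CommRing R] (I : Ideal R) (M : Type u)
    [AddCommGroup M] [Module R M] : Type u :=
  Module.DirectLimit (fun k : ℕ => ↥(I ^ (k + 1)) →ₗ[R] M) (homPowDiagram R I M)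

/-- The canonical map `M → D_I(M)` induced by the restrictions of `Hom_R(R, M) ≅ M` to the
ideals `I^k`. -/
noncomputable def toTransform (R : Type u) [CommRing R] (I : Ideal R) (M : Type u)
    [AddCommGroup M] [Module R M] : M →ₗ[R] idealTransform R I M :=
  (Module.DirectLimit.of R ℕ (fun k : ℕ => ↥(I ^ (k + 1)) →ₗ[R] M)
    (homPowDiagram R I M) 0).comp (restrictionMap R M (I ^ (0 + 1)))


instance homPowDirected (R : Type u) [CommRing R] (I : Ideal R) (M : Type u)
    [AddCommGroup M] [Module R M] :
    DirectedSystem (fun k : ℕ => ↥(I ^ (k + 1)) →ₗ[R] M)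
      (fun k l h => homPowDiagram R I M k l h) where
  map_self := fun _ f => by ext x; rfl
  map_map := fun _ _ _ h1 h2 f => by ext x; rfl

theorem homPowDiagram_restriction (R : Type u) [CommRing R] (I : Ideal R) (M : Type u)
    [AddCommGroup M] [Module R M] (m : M) (k : ℕ) (h : 0 ≤ k) :
    homPowDiagram R I M 0 k h (restrictionMap R M (I ^ (0 + 1)) m)
      = restrictionMap R M (I ^ (k + 1)) m := by
  ext x; rfl

theorem stmt5 (R : Type u) [CommRing R] (I : Ideal R) (M : Type u) [AddCommGroup M]
    [Module R M] (hinj : Module.Injective R M) :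
    Function.Surjective (toTransform R I M) ∧
      LinearMap.ker (toTransform R I M) = torsionGamma R I M := by
  constructor
  · intro z
    obtain ⟨k, f, hf⟩ := Module.DirectLimit.exists_of z
    obtain ⟨g, hg⟩ := hinj.out (I ^ (k + 1)).subtype (Submodule.injective_subtype _) f
    refine ⟨g 1, ?_⟩
    have h1 : restrictionMap R M (I ^ (k + 1)) (g 1) = f := by
      ext x
      have : f x = g (x : R) := (hg x).symm
      rw [this]
      show (x : R) • g 1 = g (x : R)
      rw [← map_smul, smul_eq_mul, mul_one]
    calc toTransform R I M (g 1)
        = Module.DirectLimit.of R ℕ _ (homPowDiagram R I M) 0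
            (restrictionMap R M (I ^ (0 + 1)) (g 1)) := rfl
      _ = Module.DirectLimit.of R ℕ _ (homPowDiagram R I M) k
            (homPowDiagram R I M 0 k (Nat.zero_le k)
              (restrictionMap R M (I ^ (0 + 1)) (g 1))) :=
          (Module.DirectLimit.of_f).symm
      _ = z := by rw [homPowDiagram_restriction, h1, hf]
  · ext m
    simp only [LinearMap.mem_ker]
    constructor
    · intro hm
      have hm0 : Module.DirectLimit.of R ℕ _ (homPowDiagram R I M) 0
          (restrictionMap R M (I ^ (0 + 1)) m) = 0 := hm
      obtain ⟨j, hj, hzero⟩ := Module.DirectLimit.of.zero_exact hm0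
      have : ∀ x ∈ (I ^ (j + 1) : Ideal R), x • m = 0 := by
        intro x hx
        have := congrArg (fun (φ : ↥(I ^ (j + 1)) →ₗ[R] M) => φ ⟨x, hx⟩) hzero
        exact this
      exact Submodule.mem_iSup_of_mem j ((Submodule.mem_torsionBySet_iff _ _).2
        (fun x => by simpa using this x x.2))
    · intro hm
      have hdir : Monotone (fun k : ℕ =>
          Submodule.torsionBySet R M ((I ^ (k + 1) : Ideal R) : Set R)) := by
        intro a b hab
        exact Submodule.torsionBySet_le_torsionBySet_of_subset
          (Ideal.pow_le_pow_right (by omega))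
      obtain ⟨k, hk⟩ := (Submodule.mem_iSup_of_directed _ hdir.directed_le).1 hm
      have hres : restrictionMap R M (I ^ (k + 1)) m = 0 := by
        ext x
        exact (Submodule.mem_torsionBySet_iff _ _).1 hk ⟨(x : R), x.2⟩
      have : toTransform R I M m = Module.DirectLimit.of R ℕ _ (homPowDiagram R I M) k
          (homPowDiagram R I M 0 k (Nat.zero_le k)
            (restrictionMap R M (I ^ (0 + 1)) m)) := (Module.DirectLimit.of_f).symm
      rw [this, homPowDiagram_restriction, hres, map_zero]
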